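/- arXiv:1502.02301 — 4 statements merged into one kernel-verified Lean document; each statement's English description precedes it below -/
import Mathlib

section
/- The Chalker–Coddington operator U(φ) = D·T(φ) on ℓ²(ℤ²), where T(φ) = cos(φ)·S_↺ + i·sin(φ)·S_↻, is unitarily equivalent (via the explicit identification I of ℓ²(ℤ²) with ℂ⁴⊗ℓ²(ℤ²) relabeling each 2×2 plaquette) to the operator Ũ(φ) = D̃·(cos(φ)·R⊗1 + i·sin(φ)·(R^{−1}⊗1)·S) on ℂ⁴⊗ℓ²(ℤ²), where D̃ = I D I^{−1}. -/
open Complex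

noncomputable section

/-- `ℓ²(ℤ²)`. -/
abbrev K2 := lp (fun _ : ℤ × ℤ => ℂ) 2
/-- `ℂ⁴ ⊗ ℓ²(ℤ²)`; the coin index `{±1,±2}` is encoded as `Fin 2 × Bool`
(`(0, s)` is `±1`, `(1, s)` is `±2`, with `s = true` meaning `+`). -/
abbrev H4 := lp (fun _ : (Fin 2 × Bool) × (ℤ × ℤ) => ℂ) 2

def δ2 (m : ℤ × ℤ) : K2 := lp.single 2 m 1
def e4 (τ : Fin 2 × Bool) (j : ℤ × ℤ) : H4 := lp.single 2 (τ, j) 1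

/-- The counterclockwise plaquette permutation of `ℤ²`. -/
def sigl (m : ℤ × ℤ) : ℤ × ℤ :=
  if Even m.1 then (if Even m.2 then (m.1 + 1, m.2) else (m.1, m.2 - 1))
  else (if Even m.2 then (m.1, m.2 + 1) else (m.1 - 1, m.2))

/-- The clockwise plaquette permutation of `ℤ²`. -/
def sigr (m : ℤ × ℤ) : ℤ × ℤ :=
  if Even m.1 then (if Even m.2 then (m.1, m.2 - 1) else (m.1 - 1, m.2))
  else (if Even m.2 then (m.1 + 1, m.2) else (m.1, m.2 + 1))

/-- The coin map `R : |±1⟩ ↦ |±2⟩, |±2⟩ ↦ |∓1⟩`. -/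
def rho (τ : Fin 2 × Bool) : Fin 2 × Bool := if τ.1 = 0 then (1, τ.2) else (0, !τ.2)

/-- The coin map `R⁻¹`. -/
def rhoInv (τ : Fin 2 × Bool) : Fin 2 × Bool := if τ.1 = 1 then (0, τ.2) else (1, !τ.2)

/-- The step `ĵ + τ̂` with `±̂1 = (±1,0)`, `±̂2 = (0,±1)`. -/
def step4 (τ : Fin 2 × Bool) (m : ℤ × ℤ) : ℤ × ℤ :=
  if τ.1 = 0 then (m.1 + (if τ.2 then 1 else -1), m.2)
  else (m.1, m.2 + (if τ.2 then 1 else -1))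

lemma clm_ext_delta (T T' : K2 →L[ℂ] H4) (h : ∀ m, T (δ2 m) = T' (δ2 m)) :
    ∀ f : K2, T f = T' f := by
  intro f
  have hs : HasSum (fun m : ℤ × ℤ => lp.single 2 m (f m)) f :=
    lp.hasSum_single (by norm_num) f
  have e : ∀ m, T (lp.single 2 m (f m)) = T' (lp.single 2 m (f m)) := by
    intro m
    have hsm : lp.single 2 m (f m) = f m • δ2 m := by
      rw [δ2, ← lp.single_smul]
      norm_num
    rw [hsm, map_smul, map_smul, h]
  have h1 := hs.mapL T
  rw [funext e] at h1
  exact h1.unique (hs.mapL T')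

/-- The Chalker–Coddington operator `U(φ) = D·T(φ)` on `ℓ²(ℤ²)` is unitarily
equivalent, via the plaquette relabeling `I`, to
`Ũ(φ) = D̃ (cos φ · R⊗1 + i sin φ · (R⁻¹⊗1) S)` on `ℂ⁴ ⊗ ℓ²(ℤ²)`. -/
theorem chalker_coddington_is_generalized_qw
    (φ : ℝ) (hφ : φ ∈ Set.Icc 0 (Real.pi / 2))
    (dcoef : ℤ × ℤ → ℂ) (hdcoef : ∀ m, ‖dcoef m‖ = 1)
    (D : K2 →L[ℂ] K2) (hD : ∀ m, D (δ2 m) = dcoef m • δ2 m)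
    (Sl : K2 →L[ℂ] K2) (hSl : ∀ m, Sl (δ2 m) = δ2 (sigl m))
    (Sr : K2 →L[ℂ] K2) (hSr : ∀ m, Sr (δ2 m) = δ2 (sigr m))
    (U : K2 →L[ℂ] K2)
    (hU : U = D.comp ((Real.cos φ : ℂ) • Sl + (Complex.I * Real.sin φ) • Sr))
    (Iop : K2 ≃ₗᵢ[ℂ] H4)
    (hI : ∀ j : ℤ × ℤ,
      Iop (δ2 (2 * j.1, 2 * j.2)) = e4 (1, false) j ∧
      Iop (δ2 (2 * j.1 + 1, 2 * j.2)) = e4 (0, true) j ∧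
      Iop (δ2 (2 * j.1 + 1, 2 * j.2 + 1)) = e4 (1, true) j ∧
      Iop (δ2 (2 * j.1, 2 * j.2 + 1)) = e4 (0, false) j)
    (RI : H4 →L[ℂ] H4) (hRI : ∀ τ j, RI (e4 τ j) = e4 (rho τ) j)
    (RIinv : H4 →L[ℂ] H4) (hRIinv : ∀ τ j, RIinv (e4 τ j) = e4 (rhoInv τ) j)
    (S : H4 →L[ℂ] H4) (hS : ∀ τ j, S (e4 τ j) = e4 τ (step4 τ j)) :
    ∀ x : H4,
      Iop (U (Iop.symm x)) =
      Iop (D (Iop.symm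
        ((Real.cos φ : ℂ) • RI x + (Complex.I * Real.sin φ) • RIinv (S x)))) := by
  intro x
  have hP : ∀ m : ℤ × ℤ, Iop (δ2 (sigl m)) = RI (Iop (δ2 m)) ∧
      Iop (δ2 (sigr m)) = RIinv (S (Iop (δ2 m))) := by
    rintro ⟨m1, m2⟩
    obtain ⟨a, ha | ha⟩ := Int.even_or_odd' m1 <;>
      obtain ⟨b, hb | hb⟩ := Int.even_or_odd' m2 <;> subst ha hb
    · constructor
      · have hsl : sigl (2*a, 2*b) = (2*a+1, 2*b) := by simp [sigl, parity_simps]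
        rw [hsl, (show Iop (δ2 (2*a+1, 2*b)) = e4 (0, true) (a, b) from (hI (a, b)).2.1),
          (show Iop (δ2 (2*a, 2*b)) = e4 (1, false) (a, b) from (hI (a, b)).1), hRI]
        rfl
      · have hsr : sigr (2*a, 2*b) = (2*a, 2*(b-1)+1) := by
          simp [sigr, parity_simps, Prod.mk.injEq]; omega
        rw [hsr,
          (show Iop (δ2 (2*a, 2*(b-1)+1)) = e4 (0, false) (a, b-1) from (hI (a, b-1)).2.2.2),
          (show Iop (δ2 (2*a, 2*b)) = e4 (1, false) (a, b) from (hI (a, b)).1), hS, hRIinv]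
        simp [rhoInv, step4, sub_eq_add_neg]
    · -- m = (2a, 2b+1)
      constructor
      · have hsl : sigl (2*a, 2*b+1) = (2*a, 2*b) := by
          simp [sigl, parity_simps, Prod.mk.injEq]
        rw [hsl, (show Iop (δ2 (2*a, 2*b)) = e4 (1, false) (a, b) from (hI (a, b)).1),
          (show Iop (δ2 (2*a, 2*b+1)) = e4 (0, false) (a, b) from (hI (a, b)).2.2.2), hRI]
        rfl
      · have hsr : sigr (2*a, 2*b+1) = (2*(a-1)+1, 2*b+1) := by
          simp [sigr, parity_simps, Prod.mk.injEq, Int.odd_mul, Int.not_odd_iff_even.mpr even_two]; omega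
        rw [hsr,
          (show Iop (δ2 (2*(a-1)+1, 2*b+1)) = e4 (1, true) (a-1, b) from (hI (a-1, b)).2.2.1),
          (show Iop (δ2 (2*a, 2*b+1)) = e4 (0, false) (a, b) from (hI (a, b)).2.2.2), hS, hRIinv]
        simp [rhoInv, step4, sub_eq_add_neg]
    · -- m = (2a+1, 2b)
      constructor
      · have hsl : sigl (2*a+1, 2*b) = (2*a+1, 2*b+1) := by
          simp [sigl, parity_simps, Prod.mk.injEq]
        rw [hsl, (show Iop (δ2 (2*a+1, 2*b+1)) = e4 (1, true) (a, b) from (hI (a, b)).2.2.1),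
          (show Iop (δ2 (2*a+1, 2*b)) = e4 (0, true) (a, b) from (hI (a, b)).2.1), hRI]
        rfl
      · have hsr : sigr (2*a+1, 2*b) = (2*(a+1), 2*b) := by
          simp [sigr, parity_simps, Prod.mk.injEq, Int.odd_mul, Int.not_odd_iff_even.mpr even_two]; omega
        rw [hsr,
          (show Iop (δ2 (2*(a+1), 2*b)) = e4 (1, false) (a+1, b) from (hI (a+1, b)).1),
          (show Iop (δ2 (2*a+1, 2*b)) = e4 (0, true) (a, b) from (hI (a, b)).2.1), hS, hRIinv]
        simp [rhoInv, step4]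
    · -- m = (2a+1, 2b+1)
      constructor
      · have hsl : sigl (2*a+1, 2*b+1) = (2*a, 2*b+1) := by
          simp [sigl, parity_simps, Prod.mk.injEq, Int.odd_mul, Int.not_odd_iff_even.mpr even_two]
        rw [hsl, (show Iop (δ2 (2*a, 2*b+1)) = e4 (0, false) (a, b) from (hI (a, b)).2.2.2),
          (show Iop (δ2 (2*a+1, 2*b+1)) = e4 (1, true) (a, b) from (hI (a, b)).2.2.1), hRI]
        rfl
      · have hsr : sigr (2*a+1, 2*b+1) = (2*a+1, 2*(b+1)) := by
          simp [sigr, parity_simps, Prod.mk.injEq, Int.odd_mul, Int.not_odd_iff_even.mpr even_two]; omega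
        rw [hsr,
          (show Iop (δ2 (2*a+1, 2*(b+1))) = e4 (0, true) (a, b+1) from (hI (a, b+1)).2.1),
          (show Iop (δ2 (2*a+1, 2*b+1)) = e4 (1, true) (a, b) from (hI (a, b)).2.2.1), hS, hRIinv]
        simp [rhoInv, step4]
  -- package as continuous linear maps and use density
  set J : K2 →L[ℂ] H4 := (Iop.toContinuousLinearEquiv : K2 ≃L[ℂ] H4).toContinuousLinearMap
    with hJdef
  have hJ : ∀ f : K2, J f = Iop f := fun f => rfl
  set c1 : ℂ := (Real.cos φ : ℂ) with hc1
  set c2 : ℂ := Complex.I * Real.sin φ with hc2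
  have hTT' : ∀ f : K2, (J.comp (c1 • Sl + c2 • Sr)) f =
      ((c1 • RI + c2 • RIinv.comp S).comp J) f := by
    refine clm_ext_delta _ _ ?_
    intro m
    simp only [ContinuousLinearMap.comp_apply, ContinuousLinearMap.add_apply,
      ContinuousLinearMap.smul_apply, hJ, hSl, hSr, map_add, map_smul]
    rw [(hP m).1, (hP m).2]
  have hmain := hTT' (Iop.symm x)
  simp only [ContinuousLinearMap.comp_apply, ContinuousLinearMap.add_apply,
    ContinuousLinearMap.smul_apply, hJ, Iop.apply_symm_apply] at hmain
  have hinner : (c1 • Sl + c2 • Sr) (Iop.symm x) =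
      Iop.symm (c1 • RI x + c2 • RIinv (S x)) := by
    have := congrArg Iop.symm hmain
    rwa [Iop.symm_apply_apply] at this
  rw [hU]
  simp only [ContinuousLinearMap.comp_apply]
  rw [hinner]
end
end

section
/- For each (x₁,x₂) ∈ 𝕋² and φ ∈ [0,π/2], the 4×4 matrix M(x₁,x₂) with rows (0, i sinφ e^{ix₂}, 0, cosφ), (cosφ, 0, i sinφ e^{−ix₁}, 0), (0, cosφ, 0, i sinφ e^{−ix₂}), (i sinφ e^{ix₁}, 0, cosφ, 0) is unitary, and its eigenvalues are the four square roots ±√(μ₊), ±√(μ₋) of μ_± = i·p ± √(1−p²), where p = sin(2φ)·(cos x₁ + cos x₂)/2. -/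
open Complex

noncomputable section

/-- The Fourier symbol of the translation invariant part of the Chalker–Coddington
model. -/
def Mcc (φ x₁ x₂ : ℝ) : Matrix (Fin 4) (Fin 4) ℂ :=
  !![0, Complex.I * Real.sin φ * Complex.exp (Complex.I * x₂), 0, (Real.cos φ : ℂ);
     (Real.cos φ : ℂ), 0, Complex.I * Real.sin φ * Complex.exp (-Complex.I * x₁), 0;
     0, (Real.cos φ : ℂ), 0, Complex.I * Real.sin φ * Complex.exp (-Complex.I * x₂);
     Complex.I * Real.sin φ * Complex.exp (Complex.I * x₁), 0, (Real.cos φ : ℂ), 0]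

lemma exp_mul_exp_neg (t : ℝ) : Complex.exp (Complex.I * t) * Complex.exp (-Complex.I * t) = 1 := by
  rw [← Complex.exp_add]
  norm_num

lemma exp_add_exp_neg (t : ℝ) :
    Complex.exp (Complex.I * t) + Complex.exp (-Complex.I * t) = 2 * (Real.cos t : ℂ) := by
  have h1 : Complex.I * (t : ℂ) = (t : ℂ) * Complex.I := mul_comm _ _
  have h2 : -Complex.I * (t : ℂ) = ((-t : ℝ) : ℂ) * Complex.I := by push_cast; ring
  rw [h1, h2, Complex.exp_mul_I, Complex.exp_mul_I, Complex.ofReal_cos]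
  push_cast
  rw [Complex.cos_neg, Complex.sin_neg]
  ring

lemma det4 (z a b c d e : ℂ) :
    (!![z, a, 0, b; b, z, c, 0; 0, b, z, d; e, 0, b, z] : Matrix (Fin 4) (Fin 4) ℂ).det
      = z^4 - z^2*(b*d+b*c+a*b+b*e) + a*b^2*d - a*c*d*e - b^4 + b^2*c*e := by
  simp [Matrix.det_succ_row_zero, Fin.sum_univ_succ]
  simp [Fin.succAbove, Fin.lt_def]
  ring

lemma det_key (φ x₁ x₂ : ℝ) (z : ℂ) :
    (z • (1 : Matrix (Fin 4) (Fin 4) ℂ) - Mcc φ x₁ x₂).det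
      = z ^ 4 - 2 * Complex.I * (Real.sin φ * Real.cos φ * (Real.cos x₁ + Real.cos x₂)) * z ^ 2 - 1 := by
  have hM : z • (1 : Matrix (Fin 4) (Fin 4) ℂ) - Mcc φ x₁ x₂ =
      !![z, -(Complex.I * Real.sin φ * Complex.exp (Complex.I * x₂)), 0, -(Real.cos φ : ℂ);
         -(Real.cos φ : ℂ), z, -(Complex.I * Real.sin φ * Complex.exp (-Complex.I * x₁)), 0;
         0, -(Real.cos φ : ℂ), z, -(Complex.I * Real.sin φ * Complex.exp (-Complex.I * x₂));
         -(Complex.I * Real.sin φ * Complex.exp (Complex.I * x₁)), 0, -(Real.cos φ : ℂ), z] := by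
    ext i j
    fin_cases i <;> fin_cases j <;> simp [Mcc, Matrix.one_apply]
  rw [hM, det4]
  have hP1 := exp_mul_exp_neg x₁
  have hP2 := exp_mul_exp_neg x₂
  have hA1 := exp_add_exp_neg x₁
  have hA2 := exp_add_exp_neg x₂
  have hI : Complex.I ^ 2 = -1 := Complex.I_sq
  have hφ : (Real.sin φ : ℂ) ^ 2 + (Real.cos φ : ℂ) ^ 2 = 1 := by
    exact_mod_cast Real.sin_sq_add_cos_sq φ
  set s : ℂ := (Real.sin φ : ℂ)
  set c : ℂ := (Real.cos φ : ℂ)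

  linear_combination
    (-(Complex.I * s * c * z^2)) * hA1 + (-(Complex.I * s * c * z^2)) * hA2
    + (Complex.I^2 * s^2 * c^2 - Complex.I^4 * s^4 * (Complex.exp (Complex.I * x₁) * Complex.exp (-Complex.I * x₁))) * hP2
    + (Complex.I^2 * s^2 * c^2 - Complex.I^4 * s^4) * hP1
    + (2 * s^2 * c^2 - s^4 * (Complex.I^2 - 1)) * hI
    + (-(s^2 + c^2 + 1)) * hφ

/-- For `φ ∈ [0,π/2]` and `(x₁,x₂) ∈ 𝕋²`, the matrix `M(x₁,x₂)` is unitary and its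
eigenvalues are exactly the square roots of `μ_± = i p ± √(1-p²)`,
where `p = sin(2φ)(cos x₁ + cos x₂)/2`. -/
theorem Mcc_unitary_and_eigenvalues (φ x₁ x₂ : ℝ) (hφ : φ ∈ Set.Icc 0 (Real.pi / 2)) :
    Mcc φ x₁ x₂ ∈ Matrix.unitaryGroup (Fin 4) ℂ ∧
    (let p : ℝ := Real.sin (2 * φ) * (Real.cos x₁ + Real.cos x₂) / 2
     spectrum ℂ (Mcc φ x₁ x₂) =
      {z : ℂ | z ^ 2 = Complex.I * p + (Real.sqrt (1 - p ^ 2) : ℂ) ∨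
               z ^ 2 = Complex.I * p - (Real.sqrt (1 - p ^ 2) : ℂ)}) := by
  have hI : Complex.I ^ 2 = -1 := Complex.I_sq
  have hpyth : (Real.sin φ : ℂ) ^ 2 + (Real.cos φ : ℂ) ^ 2 = 1 := by
    exact_mod_cast Real.sin_sq_add_cos_sq φ
  constructor
  · have hP1 : Complex.exp (Complex.I * x₁) * Complex.exp (-(Complex.I * x₁)) = 1 := by
      rw [← neg_mul]; exact exp_mul_exp_neg x₁
    have hP2 : Complex.exp (Complex.I * x₂) * Complex.exp (-(Complex.I * x₂)) = 1 := by
      rw [← neg_mul]; exact exp_mul_exp_neg x₂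
    rw [Matrix.mem_unitaryGroup_iff]
    ext i j
    fin_cases i <;> fin_cases j <;>
      simp [Mcc, Matrix.mul_apply, Fin.sum_univ_four, Matrix.conjTranspose_apply,
        Matrix.one_apply, map_mul, Complex.conj_I, Complex.conj_ofReal, ← Complex.exp_conj,
        map_neg, neg_mul, -Complex.ofReal_sin, -Complex.ofReal_cos]
    all_goals try ring
    all_goals
      first
        | linear_combination (-(Real.sin φ : ℂ)^2 * Complex.I^2) * hP1 + (-(Real.sin φ : ℂ)^2) * hI + hpyth
        | linear_combination (-(Real.sin φ : ℂ)^2 * Complex.I^2) * hP2 + (-(Real.sin φ : ℂ)^2) * hI + hpyth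
  · intro p
    have hp : p = Real.sin φ * Real.cos φ * (Real.cos x₁ + Real.cos x₂) := by
      show Real.sin (2 * φ) * (Real.cos x₁ + Real.cos x₂) / 2 = _
      rw [Real.sin_two_mul]; ring
    have hp2 : p ^ 2 ≤ 1 := by
      have hs : Real.sin (2 * φ) ^ 2 ≤ 1 := Real.sin_sq_le_one _
      have hc1 : Real.cos x₁ ≤ 1 := Real.cos_le_one x₁
      have hc1' : -1 ≤ Real.cos x₁ := Real.neg_one_le_cos x₁
      have hc2 : Real.cos x₂ ≤ 1 := Real.cos_le_one x₂
      have hc2' : -1 ≤ Real.cos x₂ := Real.neg_one_le_cos x₂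
      have hc : (Real.cos x₁ + Real.cos x₂) ^ 2 ≤ 4 := by nlinarith
      show (Real.sin (2 * φ) * (Real.cos x₁ + Real.cos x₂) / 2) ^ 2 ≤ 1
      nlinarith [sq_nonneg (Real.sin (2*φ)), sq_nonneg (Real.cos x₁ + Real.cos x₂)]
    have hr : ((Real.sqrt (1 - p ^ 2) : ℝ) : ℂ) ^ 2 = 1 - (p : ℂ) ^ 2 := by
      have := Real.sq_sqrt (by linarith : (0:ℝ) ≤ 1 - p ^ 2)
      exact_mod_cast congrArg (Complex.ofReal) this
    ext z
    have hmem : z ∈ spectrum ℂ (Mcc φ x₁ x₂) ↔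
        (z • (1 : Matrix (Fin 4) (Fin 4) ℂ) - Mcc φ x₁ x₂).det = 0 := by
      rw [spectrum.mem_iff, Matrix.isUnit_iff_isUnit_det, isUnit_iff_ne_zero, not_not,
        Algebra.algebraMap_eq_smul_one]
    rw [Set.mem_setOf_eq, hmem, det_key]
    have hfac : z ^ 4 - 2 * Complex.I * (Real.sin φ * Real.cos φ * (Real.cos x₁ + Real.cos x₂)) * z ^ 2 - 1
        = (z ^ 2 - (Complex.I * p + (Real.sqrt (1 - p ^ 2) : ℂ)))
          * (z ^ 2 - (Complex.I * p - (Real.sqrt (1 - p ^ 2) : ℂ))) := by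
      have hpc : (p : ℂ) = (Real.sin φ : ℂ) * (Real.cos φ : ℂ) * ((Real.cos x₁ : ℂ) + (Real.cos x₂ : ℂ)) := by
        exact_mod_cast congrArg (Complex.ofReal) hp
      linear_combination (-(p:ℂ)^2) * hI + hr + (2 * Complex.I * z ^ 2) * hpc
    rw [hfac, mul_eq_zero, sub_eq_zero, sub_eq_zero]
end
end

section
/- Let M(x) = diag(e^{ix}, e^{−ix})·e^{−iη}[[α, −β̄],[β, ᾱ]] with |α|²+|β|²=1, α ≠ 0. Then for every x ∈ 𝕋 the eigenvalues of M(x) are λ_±(x) = e^{−iη}(p(x) ± i√(1−p(x)²)) where p(x) = |α| cos(x + arg α), and the union over x ∈ 𝕋 of the spectra of M(x) equals the two arcs B_± = { e^{−iη}(p ± i√(1−p²)) : p ∈ [−|α|, |α|] } of the unit circle. -/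
open Complex

noncomputable section

/-- The Fourier symbol `M(x) = diag(e^{ix}, e^{-ix}) · e^{-iη} [[α, -β̄],[β, ᾱ]]`
of a homogeneous one-dimensional quantum walk. -/
def M1 (α β : ℂ) (η : ℝ) (x : ℝ) : Matrix (Fin 2) (Fin 2) ℂ :=
  Matrix.diagonal ![Complex.exp (Complex.I * x), Complex.exp (-Complex.I * x)] *
    (Complex.exp (-Complex.I * η) • !![α, -(starRingEnd ℂ β); β, starRingEnd ℂ α])

lemma M1_entries (α β : ℂ) (η x : ℝ) :
    M1 α β η x = !![Complex.exp (-Complex.I * η) * Complex.exp (Complex.I * x) * α,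
      -(Complex.exp (-Complex.I * η) * Complex.exp (Complex.I * x) * starRingEnd ℂ β);
      Complex.exp (-Complex.I * η) * Complex.exp (-Complex.I * x) * β,
      Complex.exp (-Complex.I * η) * Complex.exp (-Complex.I * x) * starRingEnd ℂ α] := by
  unfold M1
  ext i j
  fin_cases i <;> fin_cases j <;>
    simp [Matrix.mul_apply, Fin.sum_univ_two, Matrix.diagonal] <;> ring

lemma trace_id (α : ℂ) (x : ℝ) :
    Complex.exp (Complex.I * x) * α + Complex.exp (-Complex.I * x) * starRingEnd ℂ α
      = 2 * ((‖α‖ : ℂ) * (Real.cos (x + α.arg) : ℂ)) := by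
  have key : ∀ t : ℝ, Complex.exp (Complex.I * t) + Complex.exp (-Complex.I * t)
      = 2 * Real.cos t := by
    intro t
    have h1 : Complex.I * t = (t:ℂ) * I := by ring
    have h2 : -Complex.I * t = ((-t : ℝ):ℂ) * I := by push_cast; ring
    rw [h1, h2, Complex.exp_mul_I, Complex.exp_mul_I]
    push_cast
    rw [Complex.cos_neg, Complex.sin_neg]
    ring
  conv_lhs => rw [← Complex.norm_mul_exp_arg_mul_I α]
  rw [map_mul, ← Complex.exp_conj]
  have hc : (starRingEnd ℂ) ((α.arg : ℂ) * I) = -((α.arg:ℂ) * I) := by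
    simp [Complex.conj_ofReal]
  rw [hc, Complex.conj_ofReal]
  have f1 : Complex.exp (Complex.I * x) * Complex.exp ((α.arg:ℂ) * I)
      = Complex.exp (Complex.I * ((x:ℂ) + α.arg)) := by
    rw [← Complex.exp_add]; ring_nf
  have f2 : Complex.exp (-Complex.I * x) * Complex.exp (-((α.arg:ℂ) * I))
      = Complex.exp (-Complex.I * ((x:ℂ) + α.arg)) := by
    rw [← Complex.exp_add]; ring_nf
  have k := key (x + α.arg)
  push_cast at k ⊢
  calc Complex.exp (Complex.I * x) * ((‖α‖ : ℂ) * Complex.exp ((α.arg:ℂ) * I)) +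
        Complex.exp (-Complex.I * x) * ((‖α‖ : ℂ) * Complex.exp (-((α.arg:ℂ) * I)))
      = (‖α‖ : ℂ) * (Complex.exp (Complex.I * ((x:ℂ) + α.arg)) +
          Complex.exp (-Complex.I * ((x:ℂ) + α.arg))) := by rw [← f1, ← f2]; ring
    _ = 2 * ((‖α‖ : ℂ) * Complex.cos ((x:ℂ) + α.arg)) := by rw [k]; ring

lemma spec_eq (α β : ℂ) (η : ℝ)
    (h1 : ‖α‖ ^ 2 + ‖β‖ ^ 2 = 1) (x : ℝ) :
    spectrum ℂ (M1 α β η x) =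
      {Complex.exp (-Complex.I * η) *
          (‖α‖ * Real.cos (x + α.arg) +
            Complex.I * Real.sqrt (1 - (‖α‖ * Real.cos (x + α.arg)) ^ 2)),
       Complex.exp (-Complex.I * η) *
          (‖α‖ * Real.cos (x + α.arg) -
            Complex.I * Real.sqrt (1 - (‖α‖ * Real.cos (x + α.arg)) ^ 2))} := by
  set p : ℝ := ‖α‖ * Real.cos (x + α.arg) with hp
  set s : ℝ := Real.sqrt (1 - p ^ 2) with hs
  set e : ℂ := Complex.exp (-Complex.I * η) with he
  have hα1 : ‖α‖ ^ 2 ≤ 1 := by nlinarith [sq_nonneg (‖β‖)]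
  have hpsq : p ^ 2 = ‖α‖ ^ 2 * Real.cos (x + α.arg) ^ 2 := by rw [hp]; ring
  have hple : p ^ 2 ≤ 1 := by
    nlinarith [Real.cos_sq_le_one (x + α.arg), sq_nonneg (‖α‖),
      sq_nonneg (Real.cos (x + α.arg))]
  have hs2 : s ^ 2 = 1 - p ^ 2 := Real.sq_sqrt (by linarith)
  have hs2c : (s : ℂ) ^ 2 = 1 - (p : ℂ) ^ 2 := by exact_mod_cast congrArg Complex.ofReal hs2
  have hE : Complex.exp (Complex.I * x) * Complex.exp (-Complex.I * x) = 1 := by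
    rw [← Complex.exp_add]; ring_nf; exact Complex.exp_zero
  have hαβ : α * starRingEnd ℂ α + starRingEnd ℂ β * β = 1 := by
    rw [Complex.mul_conj, mul_comm ((starRingEnd ℂ) β) β, Complex.mul_conj]
    rw [Complex.normSq_eq_norm_sq, Complex.normSq_eq_norm_sq]
    exact_mod_cast h1
  have htr := trace_id α x
  have hpc : (p : ℂ) = (‖α‖ : ℂ) * (Real.cos (x + α.arg) : ℂ) := by
    rw [hp, Complex.ofReal_mul]
  ext μ
  rw [spectrum.mem_iff, Matrix.isUnit_iff_isUnit_det, isUnit_iff_ne_zero, not_ne_iff]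
  have hM' : algebraMap ℂ (Matrix (Fin 2) (Fin 2) ℂ) μ - M1 α β η x =
      !![μ - e * Complex.exp (Complex.I * x) * α,
         e * Complex.exp (Complex.I * x) * starRingEnd ℂ β;
         -(e * Complex.exp (-Complex.I * x) * β),
         μ - e * Complex.exp (-Complex.I * x) * starRingEnd ℂ α] := by
    rw [M1_entries]
    ext i j
    fin_cases i <;> fin_cases j <;> simp [Matrix.algebraMap_matrix_apply, he, neg_mul]
  have hdet : Matrix.det (algebraMap ℂ (Matrix (Fin 2) (Fin 2) ℂ) μ - M1 α β η x) =
      (μ - e * ((p:ℂ) + Complex.I * s)) * (μ - e * ((p:ℂ) - Complex.I * s)) := by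
    rw [hM', Matrix.det_fin_two_of]
    linear_combination (-μ * e) * htr + (2 * μ * e) * hpc +
      (e ^ 2 * (α * starRingEnd ℂ α + starRingEnd ℂ β * β)) * hE + e ^ 2 * hαβ +
      (e ^ 2 * Complex.I ^ 2) * hs2c + (e ^ 2 * (1 - (p:ℂ) ^ 2)) * Complex.I_sq
  rw [hdet, mul_eq_zero, sub_eq_zero, sub_eq_zero, hpc]
  rw [Set.mem_insert_iff, Set.mem_singleton_iff]

/-- For `α ≠ 0`, the eigenvalues of `M(x)` are `λ_±(x) = e^{-iη}(p(x) ± i√(1-p(x)²))`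
with `p(x) = |α| cos(x + arg α)`, and the union of the spectra over `x ∈ 𝕋` is the two
bands `B_± = {e^{-iη}(p ± i√(1-p²)) : p ∈ [-|α|, |α|]}`. -/
theorem M1_spectrum (α β : ℂ) (η : ℝ)
    (h1 : ‖α‖ ^ 2 + ‖β‖ ^ 2 = 1) (hα : α ≠ 0) :
    (∀ x : ℝ,
      spectrum ℂ (M1 α β η x) =
        {Complex.exp (-Complex.I * η) *
            (‖α‖ * Real.cos (x + α.arg) +
              Complex.I * Real.sqrt (1 - (‖α‖ * Real.cos (x + α.arg)) ^ 2)),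
         Complex.exp (-Complex.I * η) *
            (‖α‖ * Real.cos (x + α.arg) -
              Complex.I * Real.sqrt (1 - (‖α‖ * Real.cos (x + α.arg)) ^ 2))}) ∧
    (⋃ x : ℝ, spectrum ℂ (M1 α β η x)) =
      {z : ℂ | ∃ p ∈ Set.Icc (-(‖α‖)) (‖α‖),
        z = Complex.exp (-Complex.I * η) *
              (p + Complex.I * Real.sqrt (1 - p ^ 2))} ∪
      {z : ℂ | ∃ p ∈ Set.Icc (-(‖α‖)) (‖α‖),
        z = Complex.exp (-Complex.I * η) *
              (p - Complex.I * Real.sqrt (1 - p ^ 2))} := by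
  refine ⟨spec_eq α β η h1, ?_⟩
  have hA0 : 0 < ‖α‖ := norm_pos_iff.mpr hα
  ext z
  simp only [Set.mem_iUnion, Set.mem_union, Set.mem_setOf_eq]
  constructor
  · rintro ⟨x, hx⟩
    rw [spec_eq α β η h1 x, Set.mem_insert_iff, Set.mem_singleton_iff] at hx
    have hpm : ‖α‖ * Real.cos (x + α.arg) ∈
        Set.Icc (-(‖α‖)) (‖α‖) := by
      constructor
      · nlinarith [Real.neg_one_le_cos (x + α.arg)]
      · nlinarith [Real.cos_le_one (x + α.arg)]
    rcases hx with hx | hx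
    · refine Or.inl ⟨_, hpm, ?_⟩
      rw [hx]; push_cast; ring
    · refine Or.inr ⟨_, hpm, ?_⟩
      rw [hx]; push_cast; ring
  · have harccos : ∀ p : ℝ, p ∈ Set.Icc (-(‖α‖)) (‖α‖) →
        ∃ x : ℝ, ‖α‖ * Real.cos (x + α.arg) = p := by
      rintro p ⟨hl, hr⟩
      refine ⟨Real.arccos (p / ‖α‖) - α.arg, ?_⟩
      rw [sub_add_cancel, Real.cos_arccos]
      · field_simp
      · rw [le_div_iff₀ hA0]; linarith
      · rw [div_le_iff₀ hA0]; linarith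
    rintro (⟨p, hpmem, hz⟩ | ⟨p, hpmem, hz⟩) <;>
    · obtain ⟨x, hx⟩ := harccos p hpmem
      have hxc : (‖α‖ : ℂ) * (Real.cos (x + α.arg) : ℂ) = (p : ℂ) := by
        exact_mod_cast congrArg Complex.ofReal hx
      refine ⟨x, ?_⟩
      rw [spec_eq α β η h1 x, Set.mem_insert_iff, Set.mem_singleton_iff, hx, hxc]
      simp [hz]
end
end

section
/- For the one-dimensional homogeneous quantum walk symbol M(x) = diag(e^{ix},e^{−ix})·e^{−iη}[[α,−β̄],[β,ᾱ]], the two eigenvalue branches λ_±(x) = e^{−iη}(p(x) ± i√(1−p(x)²)), p(x) = |α|cos(φ(x)), cross (λ₊(x) = λ₋(x)) if and only if |α| = 1 and |p(x)| = 1, and the derivative λ_±'(x) vanishes exactly at the critical points of p, i.e., where sin(φ(x)) = 0; consequently the set of quasi-energies at which crossings or critical points occur is exactly the set of four band edges τ_M = { e^{−iη}(±|α| ± i√(1−|α|²)) }. -/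
set_option maxHeartbeats 1000000


open Complex

noncomputable section

private lemma factor_ne (σ : ℂ) (hσ : σ = 1 ∨ σ = -1) (c : ℝ) :
    (1 : ℂ) - σ * Complex.I * (c : ℂ) ≠ 0 := by
  intro h
  have := congrArg Complex.re h
  rcases hσ with h1 | h1 <;> subst h1 <;> simp at this

lemma hasDerivAt_band (φf : ℝ → ℝ) (a η : ℝ) (σ : ℂ) (x : ℝ) (hφ : HasDerivAt φf 1 x)
    (hpos : 0 < 1 - (a * Real.cos (φf x)) ^ 2) :
    HasDerivAt (fun y => Complex.exp (-Complex.I * η) *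
      (((a * Real.cos (φf y) : ℝ) : ℂ) + σ * Complex.I *
        ((Real.sqrt (1 - (a * Real.cos (φf y)) ^ 2) : ℝ) : ℂ)))
      (Complex.exp (-Complex.I * η) * (((-(a * Real.sin (φf x)) : ℝ) : ℂ) *
        (1 - σ * Complex.I *
          ((a * Real.cos (φf x) / Real.sqrt (1 - (a * Real.cos (φf x)) ^ 2) : ℝ) : ℂ)))) x := by
  have hs : Real.sqrt (1 - (a * Real.cos (φf x)) ^ 2) ≠ 0 :=
    (Real.sqrt_pos.mpr hpos).ne'
  have hq : HasDerivAt (fun y => a * Real.cos (φf y)) (-(a * Real.sin (φf x))) x := by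
    have := ((Real.hasDerivAt_cos (φf x)).comp x hφ).const_mul a
    exact this.congr_deriv (by ring)
  have hu : HasDerivAt (fun y => 1 - (a * Real.cos (φf y)) ^ 2)
      (-(((2 : ℕ) : ℝ) * (a * Real.cos (φf x)) ^ 1 * -(a * Real.sin (φf x)))) x :=
    (hq.pow 2).const_sub 1
  have hr := hu.sqrt hpos.ne'
  have h1 := hq.ofReal_comp
  have h2 := (hr.ofReal_comp).const_mul (σ * Complex.I)
  have h3 := (h1.add h2).const_mul (Complex.exp (-Complex.I * η))
  refine h3.congr_deriv ?_
  push_cast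
  field_simp
  ring


lemma notDiff_band (φf : ℝ → ℝ) (η : ℝ) (σ : ℂ) (hσ : σ = 1 ∨ σ = -1) (x : ℝ)
    (hφ : HasDerivAt φf 1 x) (hsin : Real.sin (φf x) = 0) :
    ¬ DifferentiableAt ℝ (fun y => Complex.exp (-Complex.I * η) *
      (((Real.cos (φf y) : ℝ) : ℂ) + σ * Complex.I *
        ((Real.sqrt (1 - (Real.cos (φf y)) ^ 2) : ℝ) : ℂ))) x := by
  intro hdiff
  set r : ℝ → ℝ := fun y => Real.sqrt (1 - Real.cos (φf y) ^ 2) with hrdef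
  have hw : DifferentiableAt ℝ (fun y =>
      ((Real.cos (φf y) : ℂ)) + σ * Complex.I * ((r y : ℝ) : ℂ)) x := by
    have h2 := hdiff.const_mul (Complex.exp (Complex.I * η))
    have heq : (fun y => Complex.exp (Complex.I * η) * (Complex.exp (-Complex.I * η) *
        (((Real.cos (φf y) : ℂ)) + σ * Complex.I * ((r y : ℝ) : ℂ)))) =
        fun y => ((Real.cos (φf y) : ℂ)) + σ * Complex.I * ((r y : ℝ) : ℂ) := by
      funext y
      rw [← mul_assoc, ← Complex.exp_add]
      have : Complex.I * ↑η + -Complex.I * ↑η = 0 := by ring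
      rw [this, Complex.exp_zero, one_mul]
    rwa [heq] at h2
  have him : DifferentiableAt ℝ (fun y =>
      (((Real.cos (φf y) : ℂ)) + σ * Complex.I * ((r y : ℝ) : ℂ)).im) x :=
    (Complex.imCLM.differentiableAt).comp x hw
  have hrd : DifferentiableAt ℝ r x := by
    rcases hσ with h | h <;> subst h
    · simpa using him
    · have : DifferentiableAt ℝ (fun y => -(r y)) x := by simpa using him
      simpa using this.neg
  have hcos2 : Real.cos (φf x) ^ 2 = 1 := by
    nlinarith [Real.sin_sq_add_cos_sq (φf x)]
  have hr0 : r x = 0 := by simp [hrdef, hcos2]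
  have hmin : IsLocalMin r x :=
    Filter.Eventually.of_forall (fun y => by rw [hr0]; exact Real.sqrt_nonneg _)
  have hd0 : HasDerivAt r 0 x := by
    have h := hrd.hasDerivAt
    rwa [hmin.deriv_eq_zero] at h
  have hslope0 := hasDerivAt_iff_tendsto_slope.mp hd0
  have hsd : HasDerivAt (fun y => Real.sin (φf y)) (Real.cos (φf x)) x := by
    have := (Real.hasDerivAt_sin (φf x)).comp x hφ
    rw [mul_one] at this
    exact this
  have hslope1 := hasDerivAt_iff_tendsto_slope.mp hsd
  have heqs : ∀ y, |slope r x y| = |slope (fun y => Real.sin (φf y)) x y| := by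
    intro y
    have hry : r y = |Real.sin (φf y)| := by
      show Real.sqrt (1 - Real.cos (φf y) ^ 2) = _
      rw [show (1 : ℝ) - Real.cos (φf y) ^ 2 = Real.sin (φf y) ^ 2 by
        nlinarith [Real.sin_sq_add_cos_sq (φf y)], Real.sqrt_sq_eq_abs]
    simp only [slope_def_field, hry, hr0, hsin, sub_zero, abs_div, _root_.abs_abs]
  have habs0 : Filter.Tendsto (fun y => |slope r x y|) (nhdsWithin x {x}ᶜ) (nhds 0) := by
    simpa using hslope0.abs
  have habs1 : Filter.Tendsto (fun y => |slope r x y|) (nhdsWithin x {x}ᶜ)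
      (nhds |Real.cos (φf x)|) := by
    have := hslope1.abs
    exact this.congr (fun y => (heqs y).symm)
  have hcontra := tendsto_nhds_unique habs0 habs1
  have : |Real.cos (φf x)| = 1 := by
    rw [← Real.sqrt_sq_eq_abs, hcos2, Real.sqrt_one]
  rw [this] at hcontra
  norm_num at hcontra

/-- Band functions `λ_±(x) = e^{-iη}(p(x) ± i√(1-p(x)²))`, `p(x) = |α| cos(φ(x))`. -/
def lamBand (α : ℂ) (η : ℝ) (φf : ℝ → ℝ) (s : Bool) (x : ℝ) : ℂ :=
  Complex.exp (-Complex.I * η) *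
    (‖α‖ * Real.cos (φf x) +
      (if s then 1 else -1) * Complex.I *
        Real.sqrt (1 - (‖α‖ * Real.cos (φf x)) ^ 2))

/-- For the homogeneous 1d quantum walk symbol: the eigenvalue branches cross iff
`|α| = 1` and `|p(x)| = 1`; their derivatives vanish exactly where `sin(φ(x)) = 0`;
and the quasi-energies where crossings or critical points occur form exactly the set
of four band edges `τ_M = {e^{-iη}(±|α| ± i√(1-|α|²))}`. -/
theorem qw_band_edges (α β : ℂ) (η : ℝ)
    (h1 : ‖α‖ ^ 2 + ‖β‖ ^ 2 = 1) (hα : α ≠ 0)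
    (φf : ℝ → ℝ) (hφf : ContDiff ℝ 1 φf)
    (hlift : ∀ x : ℝ, Complex.exp (Complex.I * φf x) =
      (α / ‖α‖) * Complex.exp (Complex.I * x)) :
    (∀ x : ℝ, lamBand α η φf true x = lamBand α η φf false x ↔
      (‖α‖ = 1 ∧ |‖α‖ * Real.cos (φf x)| = 1)) ∧
    (∀ x : ℝ,
      (deriv (lamBand α η φf true) x = 0 ↔ Real.sin (φf x) = 0) ∧
      (deriv (lamBand α η φf false) x = 0 ↔ Real.sin (φf x) = 0)) ∧
    {z : ℂ | ∃ x : ℝ,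
        (lamBand α η φf true x = lamBand α η φf false x ∨
          deriv (lamBand α η φf true) x = 0 ∨ deriv (lamBand α η φf false) x = 0) ∧
        (z = lamBand α η φf true x ∨ z = lamBand α η φf false x)} =
      {Complex.exp (-Complex.I * η) *
          (‖α‖ + Complex.I * Real.sqrt (1 - ‖α‖ ^ 2)),
       Complex.exp (-Complex.I * η) *
          (‖α‖ - Complex.I * Real.sqrt (1 - ‖α‖ ^ 2)),
       Complex.exp (-Complex.I * η) *
          (-(‖α‖) + Complex.I * Real.sqrt (1 - ‖α‖ ^ 2)),
       Complex.exp (-Complex.I * η) *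
          (-(‖α‖) - Complex.I * Real.sqrt (1 - ‖α‖ ^ 2))} := by
  set a : ℝ := ‖α‖ with ha_def
  clear_value a
  have ha0 : 0 < a := ha_def ▸ norm_pos_iff.mpr hα
  have ha1 : a ≤ 1 := by nlinarith [norm_nonneg β, norm_nonneg α, sq_nonneg (‖β‖)]
  -- φf has derivative 1 everywhere
  have hφd : Differentiable ℝ φf := hφf.differentiable one_ne_zero
  have hφ1 : ∀ x : ℝ, HasDerivAt φf 1 x := by
    intro x
    have hd := (hφd x).hasDerivAt
    have hF : HasDerivAt (fun y : ℝ => Complex.exp (Complex.I * φf y))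
        (Complex.exp (Complex.I * φf x) * (Complex.I * ((deriv φf x : ℝ) : ℂ))) x :=
      ((hd.ofReal_comp).const_mul Complex.I).cexp
    have hG : HasDerivAt (fun y : ℝ => (α / (a : ℂ)) * Complex.exp (Complex.I * y))
        ((α / (a : ℂ)) * (Complex.exp (Complex.I * x) * Complex.I)) x := by
      have h1' : HasDerivAt (fun y : ℝ => ((y : ℂ))) 1 x := (hasDerivAt_id x).ofReal_comp
      have h2' := (h1'.const_mul Complex.I).cexp
      have h3' := h2'.const_mul (α / (a : ℂ))
      exact h3'.congr_deriv (by ring)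
    have hFG : (fun y : ℝ => Complex.exp (Complex.I * φf y)) =
        fun y : ℝ => (α / (a : ℂ)) * Complex.exp (Complex.I * y) := funext hlift
    rw [hFG] at hF
    have heq := hF.unique hG
    rw [hlift x] at heq
    have hne : (α / (a : ℂ)) * Complex.exp (Complex.I * x) ≠ 0 := by
      apply mul_ne_zero
      · exact div_ne_zero hα (by rw [ha_def]; exact_mod_cast (norm_ne_zero_iff.mpr hα))
      · exact Complex.exp_ne_zero _
    have hd1 : ((deriv φf x : ℝ) : ℂ) = 1 := by
      have h2 : (α / (a : ℂ)) * Complex.exp (Complex.I * x) * (Complex.I * ((deriv φf x : ℝ) : ℂ))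
          = (α / (a : ℂ)) * Complex.exp (Complex.I * x) * (Complex.I * 1) := by
        rw [mul_one]; linear_combination heq
      have := mul_left_cancel₀ hne h2
      exact mul_left_cancel₀ Complex.I_ne_zero this
    have : deriv φf x = 1 := by exact_mod_cast hd1
    rwa [this] at hd
  -- φf x = x + φf 0
  have hconst : ∀ x : ℝ, φf x = x + φf 0 := by
    have hdiff : Differentiable ℝ (fun x : ℝ => φf x - x) := hφd.sub differentiable_id
    have hderiv0 : ∀ x : ℝ, deriv (fun x : ℝ => φf x - x) x = 0 := by
      intro x
      have := ((hφ1 x).sub (hasDerivAt_id x)).deriv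
      exact this.trans (sub_self 1)
    intro x
    have := is_const_of_deriv_eq_zero hdiff hderiv0 x 0
    simp only [sub_zero] at this
    linarith
  -- unfolded lamBand
  have hlam : ∀ (s : Bool) (x : ℝ), lamBand α η φf s x =
      Complex.exp (-Complex.I * η) * (((a * Real.cos (φf x) : ℝ) : ℂ) +
        (if s then 1 else -1) * Complex.I *
          ((Real.sqrt (1 - (a * Real.cos (φf x)) ^ 2) : ℝ) : ℂ)) := by
    intro s x
    unfold lamBand
    rw [← ha_def]
    push_cast
    ring
  have hqle : ∀ x : ℝ, (a * Real.cos (φf x)) ^ 2 ≤ 1 := by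
    intro x
    have hc2 : Real.cos (φf x) ^ 2 ≤ 1 := by
      nlinarith [Real.sin_sq_add_cos_sq (φf x), sq_nonneg (Real.sin (φf x))]
    have ha2 : a ^ 2 ≤ 1 := by nlinarith
    rw [mul_pow]
    nlinarith [sq_nonneg a, sq_nonneg (Real.cos (φf x))]
  -- Part 1
  have hcross : ∀ x : ℝ, lamBand α η φf true x = lamBand α η φf false x ↔
      (a = 1 ∧ |a * Real.cos (φf x)| = 1) := by
    intro x
    rw [hlam, hlam]
    constructor
    · intro h
      have hE := mul_left_cancel₀ (Complex.exp_ne_zero _) h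
      norm_num at hE
      have h2 : (2 : ℂ) * Complex.I * ((Real.sqrt (1 - (a * Real.cos (φf x)) ^ 2) : ℝ) : ℂ) = 0 := by
        linear_combination hE
      have hr0 : Real.sqrt (1 - (a * Real.cos (φf x)) ^ 2) = 0 := by
        simpa using h2
      have hq1 : 1 ≤ (a * Real.cos (φf x)) ^ 2 := by
        have := Real.sqrt_eq_zero'.mp hr0
        linarith
      have hq2 : (a * Real.cos (φf x)) ^ 2 = 1 := le_antisymm (hqle x) hq1
      constructor
      · have hc2 : Real.cos (φf x) ^ 2 ≤ 1 := by
          nlinarith [Real.sin_sq_add_cos_sq (φf x), sq_nonneg (Real.sin (φf x))]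
        have hq2' := hq2
        rw [mul_pow] at hq2'
        refine le_antisymm ha1 ?_
        nlinarith [sq_nonneg a, sq_nonneg (Real.cos (φf x))]
      · rw [← Real.sqrt_sq_eq_abs, hq2, Real.sqrt_one]
    · rintro ⟨-, habs⟩
      have hq2 : (a * Real.cos (φf x)) ^ 2 = 1 := by
        rw [← _root_.sq_abs, habs, one_pow]
      rw [hq2]
      norm_num
  -- Part 2 key
  have hkey : ∀ (σ : ℂ), (σ = 1 ∨ σ = -1) → ∀ x : ℝ,
      (deriv (fun y => Complex.exp (-Complex.I * η) * (((a * Real.cos (φf y) : ℝ) : ℂ) +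
        σ * Complex.I * ((Real.sqrt (1 - (a * Real.cos (φf y)) ^ 2) : ℝ) : ℂ))) x = 0 ↔
      Real.sin (φf x) = 0) := by
    intro σ hσ x
    rcases lt_or_eq_of_le (hqle x) with hlt | heq1
    · have hpos : 0 < 1 - (a * Real.cos (φf x)) ^ 2 := by linarith
      have hD := hasDerivAt_band φf a η σ x (hφ1 x) hpos
      rw [hD.deriv]
      constructor
      · intro h0
        rcases mul_eq_zero.mp h0 with h | h
        · exact absurd h (Complex.exp_ne_zero _)
        · rcases mul_eq_zero.mp h with h' | h'
          · have h'' : -(a * Real.sin (φf x)) = 0 := by exact_mod_cast h'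
            rcases mul_eq_zero.mp (neg_eq_zero.mp h'') with h3 | h3
            · exact absurd h3 ha0.ne'
            · exact h3
          · exact absurd h' (factor_ne σ hσ _)
      · intro hs0
        rw [hs0]
        norm_num
    · have hc2 : Real.cos (φf x) ^ 2 ≤ 1 := by
        nlinarith [Real.sin_sq_add_cos_sq (φf x), sq_nonneg (Real.sin (φf x))]
      have hq2' := heq1.symm
      rw [mul_pow] at hq2'
      have haa : a = 1 := by
        refine le_antisymm ha1 ?_
        nlinarith [sq_nonneg a, sq_nonneg (Real.cos (φf x))]
      have hcos2 : Real.cos (φf x) ^ 2 = 1 := by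
        rw [haa] at hq2'; linarith
      have hsin0 : Real.sin (φf x) = 0 := by
        have hs2 : Real.sin (φf x) ^ 2 = 0 := by
          nlinarith [Real.sin_sq_add_cos_sq (φf x)]
        exact pow_eq_zero_iff two_ne_zero |>.mp hs2
      have hfun : (fun y => Complex.exp (-Complex.I * η) * (((a * Real.cos (φf y) : ℝ) : ℂ) +
            σ * Complex.I * ((Real.sqrt (1 - (a * Real.cos (φf y)) ^ 2) : ℝ) : ℂ))) =
          (fun y => Complex.exp (-Complex.I * η) * (((Real.cos (φf y) : ℝ) : ℂ) +
            σ * Complex.I * ((Real.sqrt (1 - (Real.cos (φf y)) ^ 2) : ℝ) : ℂ))) := by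
        funext y
        rw [haa]
        norm_num
      rw [hfun, deriv_zero_of_not_differentiableAt (notDiff_band φf η σ hσ x (hφ1 x) hsin0)]
      simp [hsin0]
  -- Part 2
  have hpart2 : ∀ x : ℝ, (deriv (lamBand α η φf true) x = 0 ↔ Real.sin (φf x) = 0) ∧
      (deriv (lamBand α η φf false) x = 0 ↔ Real.sin (φf x) = 0) := by
    have hfunt : lamBand α η φf true = fun y => Complex.exp (-Complex.I * η) *
        (((a * Real.cos (φf y) : ℝ) : ℂ) + (1 : ℂ) * Complex.I *
          ((Real.sqrt (1 - (a * Real.cos (φf y)) ^ 2) : ℝ) : ℂ)) := by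
      funext y; rw [hlam]; norm_num
    have hfunf : lamBand α η φf false = fun y => Complex.exp (-Complex.I * η) *
        (((a * Real.cos (φf y) : ℝ) : ℂ) + (-1 : ℂ) * Complex.I *
          ((Real.sqrt (1 - (a * Real.cos (φf y)) ^ 2) : ℝ) : ℂ)) := by
      funext y; rw [hlam]; norm_num
    intro x
    constructor
    · rw [hfunt]; exact hkey 1 (Or.inl rfl) x
    · rw [hfunf]; exact hkey (-1) (Or.inr rfl) x
  refine ⟨hcross, hpart2, ?_⟩
  -- Part 3
  ext z
  simp only [Set.mem_setOf_eq, Set.mem_insert_iff, Set.mem_singleton_iff]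
  constructor
  · rintro ⟨x, hc, hz⟩
    have hsin : Real.sin (φf x) = 0 := by
      rcases hc with h | h | h
      · obtain ⟨ha1', habs⟩ := (hcross x).mp h
        have hq2 : (a * Real.cos (φf x)) ^ 2 = 1 := by
          rw [← _root_.sq_abs, habs, one_pow]
        have hcos2 : Real.cos (φf x) ^ 2 = 1 := by
          rw [mul_pow, ha1'] at hq2; linarith
        have hs2 : Real.sin (φf x) ^ 2 = 0 := by
          nlinarith [Real.sin_sq_add_cos_sq (φf x)]
        exact pow_eq_zero_iff two_ne_zero |>.mp hs2
      · exact ((hpart2 x).1).mp h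
      · exact ((hpart2 x).2).mp h
    have hcos2 : Real.cos (φf x) ^ 2 = 1 := by
      nlinarith [Real.sin_sq_add_cos_sq (φf x)]
    have hsq : Real.sqrt (1 - (a * Real.cos (φf x)) ^ 2) = Real.sqrt (1 - a ^ 2) := by
      rw [mul_pow, hcos2, mul_one]
    have hcos : Real.cos (φf x) = 1 ∨ Real.cos (φf x) = -1 := by
      have h2 : (Real.cos (φf x) - 1) * (Real.cos (φf x) + 1) = 0 := by nlinarith
      rcases mul_eq_zero.mp h2 with h | h
      · left; linarith
      · right; linarith
    rcases hz with hz | hz <;> rw [hlam, hsq] at hz <;> rcases hcos with hc1 | hc1 <;>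
        rw [hc1] at hz
    · refine Or.inl ?_
      rw [hz]; try simp only [reduceIte, Bool.false_eq_true, if_false]; push_cast; ring
    · refine Or.inr (Or.inr (Or.inl ?_))
      rw [hz]; try simp only [reduceIte, Bool.false_eq_true, if_false]; push_cast; ring
    · refine Or.inr (Or.inl ?_)
      rw [hz]; try simp only [reduceIte, Bool.false_eq_true, if_false]; push_cast; ring
    · refine Or.inr (Or.inr (Or.inr ?_))
      rw [hz]; try simp only [reduceIte, Bool.false_eq_true, if_false]; push_cast; ring
  · intro hz
    have hx0 : φf (-(φf 0)) = 0 := by rw [hconst]; ring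
    have hx1 : φf (Real.pi - φf 0) = Real.pi := by rw [hconst]; ring
    have hs0 : Real.sin (φf (-(φf 0))) = 0 := by rw [hx0, Real.sin_zero]
    have hs1 : Real.sin (φf (Real.pi - φf 0)) = 0 := by rw [hx1, Real.sin_pi]
    rcases hz with hz | hz | hz | hz
    · refine ⟨-(φf 0), Or.inr (Or.inl (((hpart2 _).1).mpr hs0)), Or.inl ?_⟩
      rw [hz, hlam, hx0, Real.cos_zero]; try simp only [reduceIte, Bool.false_eq_true, if_false]; push_cast; ring
    · refine ⟨-(φf 0), Or.inr (Or.inl (((hpart2 _).1).mpr hs0)), Or.inr ?_⟩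
      rw [hz, hlam, hx0, Real.cos_zero]; try simp only [reduceIte, Bool.false_eq_true, if_false]; push_cast; ring
    · refine ⟨Real.pi - φf 0, Or.inr (Or.inl (((hpart2 _).1).mpr hs1)), Or.inl ?_⟩
      rw [hz, hlam, hx1, Real.cos_pi]; try simp only [reduceIte, Bool.false_eq_true, if_false]; push_cast; ring
    · refine ⟨Real.pi - φf 0, Or.inr (Or.inl (((hpart2 _).1).mpr hs1)), Or.inr ?_⟩
      rw [hz, hlam, hx1, Real.cos_pi]; try simp only [reduceIte, Bool.false_eq_true, if_false]; push_cast; ring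
end
end
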